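/- If a BPMSTP instance admits at least one feasible schedule, then the number |P_J| of distinct processing times satisfies |P_J| ≤ ⌊(−1 + √(1 + 8·M·K))/2⌋, where M is the number of machines and K the number of time slots. -/

import Mathlib

/-- A BPMSTP instance: `N` jobs with processing times `p j` (`1 ≤ p j ≤ K`),
`M` machines with energy consumption rates `u h ≥ 0`, and a time horizon
`{1, …, K}` of time slots with costs `c t ≥ 0`. -/
structure BInstance where
  N : ℕ
  M : ℕ
  K : ℕ
  hN : 0 < N
  hM : 0 < M
  hK : 0 < K
  p : Fin N → ℕ
  hp : ∀ j, 1 ≤ p j ∧ p j ≤ K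
  u : Fin M → ℝ
  hu : ∀ h, 0 ≤ u h
  c : ℕ → ℝ
  hc : ∀ t, 0 ≤ c t

/-- A schedule assigns each job a machine and a set of `p j` time slots,
with jobs on the same machine using disjoint slot sets. -/
structure Schedule (I : BInstance) where
  mach : Fin I.N → Fin I.M
  slots : Fin I.N → Finset ℕ
  slots_subset : ∀ j, slots j ⊆ Finset.Icc 1 I.K
  slots_card : ∀ j, (slots j).card = I.p j
  disj : ∀ j j', j ≠ j' → mach j = mach j' → Disjoint (slots j) (slots j')

namespace Schedule

variable {I : BInstance}

/-- A schedule is feasible if every job occupies consecutive time slots. -/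
def Feasible (S : Schedule I) : Prop :=
  ∀ j, ∃ s, S.slots j = Finset.Ico s (s + I.p j)

/-- The makespan: the largest slot used by any job. -/
def Cmax (S : Schedule I) : ℕ :=
  Finset.univ.sup fun j => (S.slots j).sup id

/-- The total energy cost. -/
def TEC (S : Schedule I) : ℝ :=
  ∑ j, I.u (S.mach j) * ∑ t ∈ S.slots j, I.c t

/-- Two schedules are equivalent if they have the same makespan and the same TEC. -/
def Equivalent (S S' : Schedule I) : Prop :=
  S.Cmax = S'.Cmax ∧ S.TEC = S'.TEC

theorem slots_nonempty (S : Schedule I) (j : Fin I.N) : (S.slots j).Nonempty := by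
  rw [← Finset.card_pos, S.slots_card]
  exact (I.hp j).1

/-- Slot `t` is occupied on machine `h`: some job assigned to `h` contains `t`. -/
def Occupied (S : Schedule I) (h : Fin I.M) (t : ℕ) : Prop :=
  ∃ j, S.mach j = h ∧ t ∈ S.slots j

/-- A split-schedule: for every job `j`, every slot between `min (T j)` and
`max (T j)` is occupied on the machine of `j`. -/
def IsSplit (S : Schedule I) : Prop :=
  ∀ j t, (S.slots j).min' (S.slots_nonempty j) ≤ t →
    t ≤ (S.slots j).max' (S.slots_nonempty j) → S.Occupied (S.mach j) t

/-- `S` dominates `S'`. -/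
def Dominates (S S' : Schedule I) : Prop :=
  S.Cmax ≤ S'.Cmax ∧ S.TEC ≤ S'.TEC ∧ (S.Cmax < S'.Cmax ∨ S.TEC < S'.TEC)

end Schedule

/-- The set of distinct processing times. -/
def PJ (I : BInstance) : Finset ℕ := Finset.univ.image I.p

/-- The set of jobs with processing time `d`. -/
def Jd (I : BInstance) (d : ℕ) : Finset (Fin I.N) := Finset.univ.filter fun j => I.p j = d

/-- The makespan lower bound `max { ⌊(∑ p j) / M⌋, max p j }`. -/
def Klb (I : BInstance) : ℕ := max ((∑ j, I.p j) / I.M) (Finset.univ.sup I.p)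

/-- `bcost I d t = ∑_{k=t}^{t+d-1} c k`, the cumulative cost of `d` slots from `t`. -/
def bcost (I : BInstance) (d t : ℕ) : ℝ := ∑ k ∈ Finset.Icc t (t + d - 1), I.c k

lemma sum_distinct_pos (s : Finset ℕ) (hs : 0 ∉ s) :
    s.card * (s.card + 1) ≤ 2 * ∑ d ∈ s, d := by
  induction s using Finset.strongInduction with
  | _ s ih =>
    rcases s.eq_empty_or_nonempty with rfl | hne
    · simp
    · set m := s.max' hne with hm
      have hmem : m ∈ s := s.max'_mem hne
      have hsub : s ⊆ Finset.Icc 1 m := by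
        intro x hx
        refine Finset.mem_Icc.mpr ⟨?_, s.le_max' x hx⟩
        rcases Nat.pos_of_ne_zero (fun h0 => hs (h0 ▸ hx)) with h1
        exact h1
      have hcard : s.card ≤ m := by
        have := Finset.card_le_card hsub
        simpa using this
      have ihe := ih (s.erase m) (Finset.erase_ssubset hmem)
        (fun h0 => hs (Finset.mem_of_mem_erase h0))
      have hce : (s.erase m).card = s.card - 1 := Finset.card_erase_of_mem hmem
      have hsum : ∑ d ∈ s, d = m + ∑ d ∈ s.erase m, d :=
        (Finset.add_sum_erase s id hmem).symm
      have hcpos : 1 ≤ s.card := Finset.card_pos.mpr hne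
      rw [hce] at ihe
      have : (s.card - 1) * (s.card - 1 + 1) + 2 * m ≤ 2 * ∑ d ∈ s, d := by
        rw [hsum]; omega
      have heq : s.card * (s.card + 1) = (s.card - 1) * (s.card - 1 + 1) + 2 * s.card := by
        obtain ⟨k, hk⟩ := Nat.exists_eq_succ_of_ne_zero (by omega : s.card ≠ 0)
        rw [hk]; simp [Nat.succ_sub_one]; ring
      omega

/-- If a BPMSTP instance admits a feasible schedule, then
`|P_J| ≤ ⌊(−1 + √(1 + 8·M·K)) / 2⌋`. -/
theorem statement2 (I : BInstance) (h : ∃ S : Schedule I, S.Feasible) :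
    (PJ I).card ≤ ⌊(-1 + Real.sqrt (1 + 8 * (I.M : ℝ) * (I.K : ℝ))) / 2⌋₊ := by
  obtain ⟨S, -⟩ := h
  -- total processing time is at most M * K
  have hmach : ∀ hm : Fin I.M,
      ∑ j ∈ Finset.univ.filter (fun j => S.mach j = hm), I.p j ≤ I.K := by
    intro hm
    have hdisj : ((Finset.univ.filter (fun j => S.mach j = hm) : Finset (Fin I.N)) : Set (Fin I.N)).PairwiseDisjoint S.slots := by
      intro a ha b hb hab
      simp only [Finset.coe_filter, Set.mem_setOf_eq] at ha hb
      exact S.disj a b hab (ha.2.trans hb.2.symm)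
    calc ∑ j ∈ Finset.univ.filter (fun j => S.mach j = hm), I.p j
        = ∑ j ∈ Finset.univ.filter (fun j => S.mach j = hm), (S.slots j).card := by
          exact Finset.sum_congr rfl (fun j _ => (S.slots_card j).symm)
      _ = ((Finset.univ.filter (fun j => S.mach j = hm)).disjiUnion S.slots hdisj).card := by
          rw [Finset.card_disjiUnion]
      _ ≤ (Finset.Icc 1 I.K).card := by
          apply Finset.card_le_card
          intro t ht
          rw [Finset.mem_disjiUnion] at ht
          obtain ⟨j, -, htj⟩ := ht
          exact S.slots_subset j htj
      _ = I.K := by simp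
  have htot : ∑ j, I.p j ≤ I.M * I.K := by
    rw [← Finset.sum_fiberwise Finset.univ S.mach I.p]
    calc ∑ hm : Fin I.M, ∑ j ∈ Finset.univ.filter (fun j => S.mach j = hm), I.p j
        ≤ ∑ _hm : Fin I.M, I.K := Finset.sum_le_sum (fun hm _ => hmach hm)
      _ = I.M * I.K := by simp [Finset.sum_const, mul_comm]
  -- sum of distinct processing times ≤ total
  have hrep : ∀ d ∈ PJ I, ∃ j, I.p j = d := by
    intro d hd
    rw [PJ, Finset.mem_image] at hd
    obtain ⟨j, -, hj⟩ := hd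
    exact ⟨j, hj⟩
  choose f hf using hrep
  have hPJsum : ∑ d ∈ (PJ I).attach, I.p (f d.1 d.2) ≤ ∑ j, I.p j := by
    have hinj : Set.InjOn (fun d : {x // x ∈ PJ I} => f d.1 d.2) (PJ I).attach := by
      intro a _ b _ hab
      have h1 : I.p (f a.1 a.2) = I.p (f b.1 b.2) := congrArg I.p hab
      rw [hf a.1 a.2, hf b.1 b.2] at h1
      exact Subtype.ext h1
    rw [← Finset.sum_image hinj]
    exact Finset.sum_le_sum_of_subset (Finset.subset_univ _)
  have hsum1 : ∑ d ∈ PJ I, d ≤ ∑ j, I.p j := by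
    calc ∑ d ∈ PJ I, d = ∑ d ∈ (PJ I).attach, I.p (f d.1 d.2) := by
          rw [← Finset.sum_attach (PJ I) (fun d => d)]
          exact Finset.sum_congr rfl (fun d _ => (hf d.1 d.2).symm)
      _ ≤ ∑ j, I.p j := hPJsum
  have h0 : 0 ∉ PJ I := by
    intro h0
    have hj := hf 0 h0
    have := (I.hp (f 0 h0)).1
    omega
  have hkey : (PJ I).card * ((PJ I).card + 1) ≤ 2 * (I.M * I.K) := by
    calc (PJ I).card * ((PJ I).card + 1) ≤ 2 * ∑ d ∈ PJ I, d := sum_distinct_pos _ h0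
      _ ≤ 2 * (I.M * I.K) := by omega
  -- convert to the real inequality
  set n := (PJ I).card
  apply Nat.le_floor
  have hMK : (0:ℝ) ≤ 1 + 8 * (I.M:ℝ) * (I.K:ℝ) := by positivity
  have hsq : ((2 * (n:ℝ) + 1))^2 ≤ 1 + 8 * (I.M:ℝ) * (I.K:ℝ) := by
    have : (n * (n+1) : ℕ) ≤ 2 * (I.M * I.K) := hkey
    have hcast : ((n:ℝ) * ((n:ℝ)+1)) ≤ 2 * ((I.M:ℝ) * (I.K:ℝ)) := by
      exact_mod_cast this
    nlinarith
  have hle : 2 * (n:ℝ) + 1 ≤ Real.sqrt (1 + 8 * (I.M:ℝ) * (I.K:ℝ)) := by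
    exact (Real.le_sqrt (by positivity) hMK).mpr hsq
  linarith
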